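/- The Shifted VT code SVT_{c,d}(n, M) = {x ∈ F_2^n : Σ i·x_i ≡ c (mod M), Σ x_i ≡ d (mod 2)} with M ≥ 2P−1 can correct a single deletion given an estimate of the deletion position accurate to within P: if y is obtained from x ∈ SVT_{c,d}(n,M) by deleting the bit at position k_D, and k̂_D satisfies |k_D − k̂_D| < P, then there is at most one pair (k', b) with |k' − k̂_D| < P (in the admissible window), b ∈ F_2, and I(y, b, k') ∈ SVT_{c,d}(n, M); moreover for that pair I(y, b, k') = x. -/

import Mathlib

/-- The VT syndrome Σ_{i=1}^m i·x_i of a binary word, over the integers. -/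
def listSynd (x : List Bool) : ℤ :=
  ∑ i ∈ Finset.range x.length, ((i : ℤ) + 1) * (if x.getD i false then 1 else 0)

/-- `insertAt y v j` inserts the block `v` into `y` at (0-indexed) position `j`. -/
def insertAt (y v : List Bool) (j : ℕ) : List Bool :=
  y.take j ++ v ++ y.drop j

lemma count_true_eq_sum (l : List Bool) :
    (l.count true : ℤ) = ∑ i ∈ Finset.range l.length, (if l.getD i false then 1 else 0) := by
  induction l with
  | nil => simp
  | cons a l ih =>
    rw [List.length_cons, Finset.sum_range_succ']
    simp only [List.getD_cons_succ, List.getD_cons_zero, List.count_cons, ← ih]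
    cases a <;> simp

lemma listSynd_cons (a : Bool) (l : List Bool) :
    listSynd (a :: l) = (if a then 1 else 0) + listSynd l + l.count true := by
  unfold listSynd
  rw [List.length_cons, Finset.sum_range_succ']
  simp only [List.getD_cons_succ, List.getD_cons_zero]
  have h : ∑ i ∈ Finset.range l.length,
      (((i+1 : ℕ) : ℤ) + 1) * (if l.getD i false then 1 else 0)
      = ∑ i ∈ Finset.range l.length,
        (((i : ℕ) : ℤ) + 1) * (if l.getD i false then 1 else 0)
        + ∑ i ∈ Finset.range l.length, (if l.getD i false then 1 else 0) := by
    rw [← Finset.sum_add_distrib]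
    exact Finset.sum_congr rfl (fun i _ => by push_cast; ring)
  rw [h, ← count_true_eq_sum]
  push_cast
  ring

lemma listSynd_append (l1 l2 : List Bool) :
    listSynd (l1 ++ l2) = listSynd l1 + listSynd l2 + l1.length * l2.count true := by
  induction l1 with
  | nil => simp [listSynd]
  | cons a l ih =>
    rw [List.cons_append, listSynd_cons, ih, listSynd_cons]
    push_cast [List.count_append, List.length_cons]
    ring

lemma listSynd_insert (y : List Bool) (b : Bool) (j : ℕ) (hj : j ≤ y.length) :
    listSynd (insertAt y [b] j)
      = listSynd y + ((j : ℤ) + 1) * (if b then 1 else 0) + (y.drop j).count true := by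
  have hy : y = y.take j ++ y.drop j := (List.take_append_drop j y).symm
  have hlen : (y.take j).length = j := by simp [hj]
  unfold insertAt
  rw [List.append_assoc, listSynd_append, List.singleton_append, listSynd_cons,
    hlen]
  conv_rhs => rw [hy, listSynd_append, hlen]
  push_cast [List.count_cons, listSynd, List.length_nil]
  cases b <;> simp <;> push_cast <;> ring

lemma count_insert (y : List Bool) (b : Bool) (j : ℕ) :
    ((insertAt y [b] j).count true : ℤ)
      = y.count true + (if b then 1 else 0) := by
  unfold insertAt
  have := List.take_append_drop j y
  push_cast [List.count_append]
  have h : (y.take j).count true + (y.drop j).count true = y.count true := by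
    rw [← List.count_append, List.take_append_drop]
  cases b <;> push_cast [← h] <;> simp <;> ring

lemma insert_eraseIdx (x : List Bool) (kD : ℕ) (h : kD < x.length) :
    insertAt (x.eraseIdx kD) [x.getD kD false] kD = x := by
  unfold insertAt
  rw [List.eraseIdx_eq_take_drop_succ]
  have htake : ((x.take kD ++ x.drop (kD+1)).take kD) = x.take kD := by
    rw [List.take_append]
    simp [List.length_take, Nat.le_of_lt h, le_of_lt h]
  have hdrop : ((x.take kD ++ x.drop (kD+1)).drop kD) = x.drop (kD+1) := by
    rw [List.drop_append]
    simp [List.length_take, le_of_lt h]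
  rw [htake, hdrop]
  have : x.getD kD false = x.get ⟨kD, h⟩ := by
    rw [List.getD_eq_getElem _ _ h]; simp
  rw [this]
  rw [List.append_assoc, List.singleton_append, List.get_eq_getElem,
    List.getElem_cons_drop, List.take_append_drop]

lemma insert_eq_insert_of_synd (y : List Bool) (b : Bool) (j k : ℕ) (M : ℕ)
    (hjk : j ≤ k) (hk : k ≤ y.length) (hlt : (k : ℤ) - j < M)
    (hsynd : listSynd (insertAt y [b] j) ≡ listSynd (insertAt y [b] k) [ZMOD (M:ℤ)]) :
    insertAt y [b] j = insertAt y [b] k := by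
  set m := k - j with hm
  set seg := (y.drop j).take m with hseg
  have hseglen : seg.length = m := by
    simp only [hseg, List.length_take, List.length_drop]
    omega
  have hdropj : y.drop j = seg ++ y.drop k := by
    have : (y.drop j).drop m = y.drop k := by
      rw [List.drop_drop]; congr 1; omega
    rw [hseg, ← this, List.take_append_drop]
  have hcount : ((y.drop j).count true : ℤ)
      = (seg.count true : ℤ) + ((y.drop k).count true : ℤ) := by
    rw [hdropj, List.count_append]; push_cast; ring
  have hs_le : (seg.count true : ℤ) ≤ (m : ℤ) := by
    have := List.count_le_length (a := true) (l := seg)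
    rw [hseglen] at this
    exact_mod_cast this
  rw [listSynd_insert y b j (le_trans hjk hk), listSynd_insert y b k hk] at hsynd
  have hdvd : (M:ℤ) ∣ (((k:ℤ) - j) * (if b then 1 else 0) - (seg.count true : ℤ)) := by
    have := hsynd.dvd
    rw [hcount] at this
    convert this using 1
    ring
  have hzero : ((k:ℤ) - j) * (if b then 1 else 0) - (seg.count true : ℤ) = 0 := by
    apply Int.eq_zero_of_abs_lt_dvd hdvd
    rw [abs_lt]
    have hsn : (0:ℤ) ≤ (seg.count true : ℤ) := by positivity
    cases b <;> simp only [if_true, if_false, Bool.false_eq_true, ite_true, ite_false] <;> omega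
  have hrep : seg = List.replicate m b := by
    cases b with
    | false =>
      norm_num at hzero
      have : seg.count true = 0 := by exact_mod_cast hzero
      rw [List.count_eq_zero] at this
      rw [List.eq_replicate_iff]
      exact ⟨hseglen, fun c hc => by cases c; rfl; exact absurd hc this⟩
    | true =>
      norm_num at hzero
      have : (seg.count true : ℤ) = (seg.length : ℤ) := by
        rw [hseglen]; omega
      have h2 : seg.count true = seg.length := by exact_mod_cast this
      rw [List.count_eq_length] at h2
      rw [List.eq_replicate_iff]
      exact ⟨hseglen, fun c hc => (h2 c hc).symm⟩
  have htakek : y.take k = y.take j ++ seg := by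
    rw [hseg, ← List.take_add]; congr 1; omega
  unfold insertAt
  rw [htakek, hdropj, hrep]
  have hswap : [b] ++ List.replicate m b = List.replicate m b ++ [b] := by
    rw [List.singleton_append, ← List.replicate_succ, List.replicate_succ']
  calc y.take j ++ [b] ++ (List.replicate m b ++ y.drop k)
      = y.take j ++ ([b] ++ List.replicate m b) ++ y.drop k := by simp [List.append_assoc]
    _ = y.take j ++ (List.replicate m b ++ [b]) ++ y.drop k := by rw [hswap]
    _ = y.take j ++ List.replicate m b ++ [b] ++ y.drop k := by simp [List.append_assoc]


/-- Membership in the Shifted VT code SVT_{c,d}(n,M). -/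
def memSVT (n : ℕ) (c : ℤ) (d : ℤ) (M : ℕ) (x : List Bool) : Prop :=
  x.length = n ∧ listSynd x ≡ c [ZMOD (M : ℤ)] ∧ (x.count true : ℤ) ≡ d [ZMOD 2]

theorem SVT_corrects_single_deletion_with_estimate
    (n P M : ℕ) (c d : ℤ) (hM : 2 * P - 1 ≤ M)
    (x : List Bool) (hx : memSVT n c d M x)
    (kD : ℕ) (hkD : kD < x.length)
    (kHat : ℤ) (hest : |(kD : ℤ) - kHat| < (P : ℤ)) :
    ∀ (k' : ℕ) (b : Bool), k' ≤ (x.eraseIdx kD).length →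
      |(k' : ℤ) - kHat| < (P : ℤ) →
      memSVT n c d M (insertAt (x.eraseIdx kD) [b] k') →
      insertAt (x.eraseIdx kD) [b] k' = x := by
  intro k' b hk' hwin hz
  have hPpos : 0 < (P : ℤ) := lt_of_le_of_lt (abs_nonneg _) hest
  have hP1 : 1 ≤ P := by exact_mod_cast hPpos
  obtain ⟨hxlen, hxs, hxp⟩ := hx
  obtain ⟨hzlen, hzs, hzp⟩ := hz
  set y := x.eraseIdx kD with hy
  have hylen : y.length + 1 = x.length := by
    rw [hy, List.length_eraseIdx_of_lt hkD]; omega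
  have hkDy : kD ≤ y.length := by omega
  set b0 := x.getD kD false with hb0
  have hxe : insertAt y [b0] kD = x := insert_eraseIdx x kD hkD
  clear_value b0
  -- parity forces b = b0
  have hb : b = b0 := by
    have h1 : ((insertAt y [b] k').count true : ℤ) ≡ ((insertAt y [b0] kD).count true : ℤ) [ZMOD 2] := by
      rw [hxe]; exact hzp.trans hxp.symm
    have := h1.dvd
    rw [count_insert, count_insert] at this
    have h2 : (2:ℤ) ∣ ((if b0 then (1:ℤ) else 0) - (if b then 1 else 0)) := by
      convert this using 1; ring
    cases b <;> cases b0 <;> first | rfl | (exfalso; norm_num at h2)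
  subst hb
  -- syndrome congruence between the two insertions
  have hsynd : listSynd (insertAt y [b] k') ≡ listSynd (insertAt y [b] kD) [ZMOD (M:ℤ)] := by
    rw [hxe]; exact hzs.trans hxs.symm
  rw [abs_lt] at hest hwin
  have hMb : ((2:ℤ) * P - 1) ≤ (M:ℤ) := by
    have : (2 * P - 1 : ℕ) = 2 * P - 1 := rfl
    omega
  rcases le_total k' kD with h | h
  · rw [insert_eq_insert_of_synd y b k' kD M h hkDy (by omega) hsynd, hxe]
  · rw [← insert_eq_insert_of_synd y b kD k' M h (by omega) (by omega) hsynd.symm, hxe]
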